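/- If [A]_R^{-s} and [A]_L^{-t} are both defined, equal, and begin with a basic session type constructor (i.e., are not of the form Next, Box, or Diamond), then s = t. -/

import Mathlib

inductive STy (σ : Type) : Type
  | base : σ → STy σ
  | next : STy σ → STy σ
  | box  : STy σ → STy σ
  | dia  : STy σ → STy σ

variable {σ : Type}

def shiftL1 : STy σ → Option (STy σ)
  | .next A => some A
  | .box A  => some (.box A)
  | _ => none

def shiftR1 : STy σ → Option (STy σ)
  | .next A => some A
  | .dia A  => some (.dia A)
  | _ => none

def shiftL : STy σ → ℕ → Option (STy σ)
  | A, 0 => some A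
  | A, t+1 => (shiftL A t).bind shiftL1

def shiftR : STy σ → ℕ → Option (STy σ)
  | A, 0 => some A
  | A, t+1 => (shiftR A t).bind shiftR1

inductive TSub : STy σ → STy σ → Prop
  | refl (A) : TSub A A
  | nextNext {A B} : TSub A B → TSub (.next A) (.next B)
  | boxNext {A B} : TSub (.box A) B → TSub (.box A) (.next B)
  | nextDia {A B} : TSub A (.dia B) → TSub (.next A) (.dia B)
  | boxR {A B} (n : ℕ) : TSub (STy.next^[n] (.box A)) B → TSub (STy.next^[n] (.box A)) (.box B)
  | boxL {A B} : TSub A B → TSub (.box A) B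
  | diaR {A B} : TSub A B → TSub A (.dia B)
  | diaL {A B} (n : ℕ) : TSub A (STy.next^[n] (.dia B)) → TSub (.dia A) (STy.next^[n] (.dia B))

inductive WTSub : STy σ → STy σ → Prop
  | refl (A) : WTSub A A
  | boxWeak {A} {m n : ℕ} : m ≤ n → WTSub (STy.next^[m] (.box A)) (STy.next^[n] (.box A))
  | diaWeak {A} {m n : ℕ} : m ≥ n → WTSub (STy.next^[m] (.dia A)) (STy.next^[n] (.dia A))

lemma shiftL_nb : ∀ (t : ℕ) (A C : STy σ), shiftL A t = some C →
    (∀ D, C ≠ .box D) → A = STy.next^[t] C := by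
  intro t
  induction t with
  | zero => intro A C h _; simpa [shiftL] using h
  | succ t ih =>
    intro A C h hC
    simp only [shiftL, Option.bind_eq_some_iff] at h
    obtain ⟨B, hB, h1⟩ := h
    cases B <;> simp [shiftL1] at h1
    · subst h1
      rw [Function.iterate_succ_apply]
      exact ih A _ hB (by intro D; simp)
    · exact absurd h1.symm (hC _)

lemma shiftR_nd : ∀ (t : ℕ) (A C : STy σ), shiftR A t = some C →
    (∀ D, C ≠ .dia D) → A = STy.next^[t] C := by
  intro t
  induction t with
  | zero => intro A C h _; simpa [shiftR] using h
  | succ t ih =>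
    intro A C h hC
    simp only [shiftR, Option.bind_eq_some_iff] at h
    obtain ⟨B, hB, h1⟩ := h
    cases B <;> simp [shiftR1] at h1
    · subst h1
      rw [Function.iterate_succ_apply]
      exact ih A _ hB (by intro D; simp)
    · exact absurd h1.symm (hC _)

lemma next_iter_inj (b : σ) : ∀ s t : ℕ, STy.next^[s] (STy.base b) = STy.next^[t] (.base b) → s = t := by
  intro s
  induction s with
  | zero =>
    intro t h
    cases t with
    | zero => rfl
    | succ t => rw [Function.iterate_succ_apply'] at h; simp at h
  | succ s ih =>
    intro t h
    cases t with
    | zero => rw [Function.iterate_succ_apply'] at h; simp at h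
    | succ t =>
      rw [Function.iterate_succ_apply', Function.iterate_succ_apply'] at h
      injection h with h
      exact congrArg Nat.succ (ih t h)

theorem stmt3 (A C : STy σ) (s t : ℕ) (b : σ) (hR : shiftR A s = some C) (hL : shiftL A t = some C) (hb : C = .base b) : s = t := by 
  subst hb
  exact next_iter_inj b s t
    (((shiftR_nd s A _ hR (by intro D; simp)).symm).trans
      (shiftL_nb t A _ hL (by intro D; simp)))
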